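/- Let Λ be a column-stochastic n×n matrix with zero diagonal, and let V_1,…,V_k be its absorbing sets (equivalently, the isolated irreducible index subsets). Then every solution x of Λx = x vanishes on all indices outside V_1 ∪ ⋯ ∪ V_k, and the solution space of Λx = x has dimension exactly k, with one basis solution supported on each V_ℓ which can be chosen strictly positive on V_ℓ. -/

import Mathlib

open Finset in
private lemma absFixed {n : ℕ} (Λ : Matrix (Fin n) (Fin n) ℝ)
    (hpos : ∀ i j, 0 ≤ Λ i j) (hcol : ∀ j, ∑ i, Λ i j = 1)
    {x : Fin n → ℝ} (hx : Λ.mulVec x = x) :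
    Λ.mulVec (fun v => |x v|) = fun v => |x v| := by
  have h1 : ∀ v, |x v| ≤ Λ.mulVec (fun v => |x v|) v := by
    intro v
    have := congrFun hx v
    rw [← this]
    simp only [Matrix.mulVec, dotProduct]
    calc |∑ u, Λ v u * x u| ≤ ∑ u, |Λ v u * x u| := Finset.abs_sum_le_sum_abs _ _
      _ = ∑ u, Λ v u * |x u| := by
          refine Finset.sum_congr rfl fun u _ => ?_
          rw [abs_mul, abs_of_nonneg (hpos v u)]
  have h2 : ∑ v, Λ.mulVec (fun v => |x v|) v = ∑ v, |x v| := by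
    simp only [Matrix.mulVec, dotProduct]
    rw [Finset.sum_comm]
    refine Finset.sum_congr rfl fun u _ => ?_
    rw [← Finset.sum_mul, hcol, one_mul]
  have h3 : ∀ v ∈ Finset.univ, Λ.mulVec (fun v => |x v|) v - |x v| = 0 := by
    rw [← Finset.sum_eq_zero_iff_of_nonneg (fun v _ => sub_nonneg.mpr (h1 v))]
    rw [Finset.sum_sub_distrib, h2, sub_self]
  funext v
  have := h3 v (Finset.mem_univ v)
  linarith
private lemma suppClosed {n : ℕ} (Λ : Matrix (Fin n) (Fin n) ℝ)
    (hpos : ∀ i j, 0 ≤ Λ i j)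
    {x : Fin n → ℝ} (hxnn : ∀ v, 0 ≤ x v) (hx : Λ.mulVec x = x) :
    ∀ v, x v = 0 → ∀ u, x u ≠ 0 → Λ v u = 0 := by
  intro v hv u hu
  have h0 : ∑ w, Λ v w * x w = 0 := by
    have := congrFun hx v
    simpa [Matrix.mulVec, dotProduct, hv] using this
  have hterm : Λ v u * x u = 0 := by
    have := (Finset.sum_eq_zero_iff_of_nonneg
      (fun w _ => mul_nonneg (hpos v w) (hxnn w))).mp h0 u (Finset.mem_univ u)
    exact this
  rcases mul_eq_zero.mp hterm with h | h
  · exact h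
  · exact absurd h hu

private lemma minClosed {n k : ℕ} (Λ : Matrix (Fin n) (Fin n) ℝ)
    (V : Fin k → Set (Fin n))
    (hall : ∀ W : Set (Fin n), W.Nonempty →
      (∀ v ∉ W, ∀ u ∈ W, Λ v u = 0) →
      (∀ W' ⊆ W, W'.Nonempty → W' ≠ W →
        ¬(∀ v ∈ W \ W', ∀ u ∈ W', Λ v u = 0)) →
      ∃ ℓ, W = V ℓ) :
    ∀ S : Set (Fin n), S.Nonempty → (∀ v ∉ S, ∀ u ∈ S, Λ v u = 0) →
      ∃ m, V m ⊆ S := by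
  intro S
  induction' hN : S.ncard using Nat.strong_induction_on with N ih generalizing S
  intro hSne hScl
  by_cases hmin : ∀ W' ⊆ S, W'.Nonempty → W' ≠ S → ¬(∀ v ∈ S \ W', ∀ u ∈ W', Λ v u = 0)
  · obtain ⟨m, hm⟩ := hall S hSne hScl hmin
    exact ⟨m, hm ▸ le_refl _⟩
  · push_neg at hmin
    obtain ⟨W, hWS, hWne, hWneq, hWcl⟩ := hmin
    have hWcl' : ∀ v ∉ W, ∀ u ∈ W, Λ v u = 0 := by
      intro v hv u hu
      by_cases hvS : v ∈ S
      · exact hWcl v ⟨hvS, hv⟩ u hu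
      · exact hScl v hvS u (hWS hu)
    have hss : W ⊂ S := hWS.ssubset_of_ne hWneq
    have hlt : W.ncard < N := hN ▸ Set.ncard_lt_ncard hss S.toFinite
    obtain ⟨m, hm⟩ := ih W.ncard hlt W rfl hWne hWcl'
    exact ⟨m, hm.trans hWS⟩
private lemma existsFix {n : ℕ} (Λ : Matrix (Fin n) (Fin n) ℝ)
    (S : Set (Fin n)) (hSne : S.Nonempty)
    (hScl : ∀ v ∉ S, ∀ u ∈ S, Λ v u = 0)
    (hcol : ∀ j, ∑ i, Λ i j = 1) :
    ∃ x : Fin n → ℝ, Λ.mulVec x = x ∧ (∀ v ∉ S, x v = 0) ∧ x ≠ 0 := by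
  classical
  letI : Fintype ↥S := Fintype.ofFinite _
  have hsum : ∀ f : Fin n → ℝ, (∀ v ∉ S, f v = 0) →
      ∑ i : ↥S, f i = ∑ i, f i := by
    intro f hf
    rw [← Finset.sum_subtype S.toFinset (fun x => Set.mem_toFinset) f]
    exact Finset.sum_subset (Finset.subset_univ _)
      (fun x _ hx => hf x (by simpa [Set.mem_toFinset] using hx))
  set M : Matrix ↥S ↥S ℝ := fun i j => Λ i j with hM
  have hMcol : ∀ j : ↥S, ∑ i, M i j = 1 := by
    intro j
    have h := hsum (fun i => Λ i j) (fun v hv => hScl v hv j j.2)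
    simp only [hM]
    rw [h, hcol]
  have hdet : (M - 1).det = 0 := by
    have h1 : (M.transpose - 1).mulVec (fun _ => 1) = 0 := by
      funext i
      simp only [Matrix.sub_mulVec, Matrix.one_mulVec, Pi.sub_apply, Pi.zero_apply]
      have h2 : M.transpose.mulVec (fun _ => 1) i = 1 := by
        simp only [Matrix.mulVec, dotProduct, Matrix.transpose_apply, mul_one]
        exact hMcol i
      rw [h2]; ring
    have hne : (fun _ : ↥S => (1:ℝ)) ≠ 0 := by
      obtain ⟨a, ha⟩ := hSne
      intro h
      have := congrFun h ⟨a, ha⟩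
      norm_num at this
    have ht : (M.transpose - 1).det = 0 := by
      rw [← Matrix.exists_mulVec_eq_zero_iff]
      exact ⟨_, hne, h1⟩
    calc (M - 1).det = (M - 1).transpose.det := (Matrix.det_transpose _).symm
      _ = (M.transpose - 1).det := by rw [Matrix.transpose_sub, Matrix.transpose_one]
      _ = 0 := ht
  obtain ⟨y, hyne, hy⟩ := (Matrix.exists_mulVec_eq_zero_iff).mpr hdet
  rw [Matrix.sub_mulVec, Matrix.one_mulVec, sub_eq_zero] at hy
  refine ⟨fun v => if h : v ∈ S then y ⟨v, h⟩ else 0, ?_, ?_, ?_⟩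
  · funext v
    by_cases hv : v ∈ S
    · have key := hsum (fun u => Λ v u * (if h : u ∈ S then y ⟨u, h⟩ else 0))
        (fun u hu => by rw [dif_neg hu, mul_zero])
      simp only [Matrix.mulVec, dotProduct, dif_pos hv]
      rw [← key]
      have h3 : ∑ u : ↥S, Λ v u * (if h : (u:Fin n) ∈ S then y ⟨u, h⟩ else 0)
          = ∑ u : ↥S, M ⟨v, hv⟩ u * y u := by
        refine Finset.sum_congr rfl fun u _ => ?_
        rw [dif_pos u.2, hM]
      rw [h3]
      exact congrFun hy ⟨v, hv⟩
    · have hz : ∀ u : Fin n, Λ v u * (if h : u ∈ S then y ⟨u, h⟩ else 0) = 0 := by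
        intro u
        by_cases h : u ∈ S
        · rw [hScl v hv u h, zero_mul]
        · rw [dif_neg h, mul_zero]
      simp only [Matrix.mulVec, dotProduct, dif_neg hv]
      exact Finset.sum_eq_zero fun u _ => hz u
  · intro v hv; exact dif_neg hv
  · intro h
    apply hyne
    funext u
    have := congrFun h u
    simpa [u.2] using this


/-- Solutions of Λx = x vanish outside the absorbing sets, and the
solution space has dimension exactly k, with one basis solution per
absorbing set, strictly positive there. -/
theorem stmt13 (n k : ℕ) (Λ : Matrix (Fin n) (Fin n) ℝ)
    (hent : ∀ i j, Λ i j ∈ Set.Icc (0:ℝ) 1)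
    (hdiag : ∀ i, Λ i i = 0)
    (hcol : ∀ j, ∑ i, Λ i j = 1)
    (V : Fin k → Set (Fin n))
    (hVne : ∀ ℓ, (V ℓ).Nonempty)
    (hdisj : ∀ ℓ m, ℓ ≠ m → Disjoint (V ℓ) (V m))
    (hiso : ∀ ℓ, ∀ v ∉ V ℓ, ∀ u ∈ V ℓ, Λ v u = 0)
    (hirr : ∀ ℓ, ∀ W ⊆ V ℓ, W.Nonempty → W ≠ V ℓ →
      ¬(∀ v ∈ V ℓ \ W, ∀ u ∈ W, Λ v u = 0))
    (hall : ∀ W : Set (Fin n), W.Nonempty →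
      (∀ v ∉ W, ∀ u ∈ W, Λ v u = 0) →
      (∀ W' ⊆ W, W'.Nonempty → W' ≠ W →
        ¬(∀ v ∈ W \ W', ∀ u ∈ W', Λ v u = 0)) →
      ∃ ℓ, W = V ℓ) :
    (∀ x : Fin n → ℝ, Λ.mulVec x = x → ∀ v, (∀ ℓ, v ∉ V ℓ) → x v = 0) ∧
    ∃ b : Fin k → (Fin n → ℝ),
      (∀ ℓ, Λ.mulVec (b ℓ) = b ℓ) ∧
      (∀ ℓ, ∀ v, v ∉ V ℓ → b ℓ v = 0) ∧
      (∀ ℓ, ∀ v ∈ V ℓ, 0 < b ℓ v) ∧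
      (∀ x : Fin n → ℝ, Λ.mulVec x = x →
        ∃! c : Fin k → ℝ, x = ∑ ℓ, c ℓ • b ℓ) := by
  classical
  have hpos : ∀ i j, 0 ≤ Λ i j := fun i j => (hent i j).1
  -- construct the basis vectors
  have hB : ∀ ℓ, ∃ bb : Fin n → ℝ, Λ.mulVec bb = bb ∧ (∀ v, v ∉ V ℓ → bb v = 0) ∧
      (∀ v ∈ V ℓ, 0 < bb v) := by
    intro ℓ
    obtain ⟨x, hxfix, hx0, hxne⟩ := existsFix Λ (V ℓ) (hVne ℓ) (hiso ℓ) hcol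
    refine ⟨fun v => |x v|, absFixed Λ hpos hcol hxfix, ?_, ?_⟩
    · intro v hv; show |x v| = 0; rw [hx0 v hv, abs_zero]
    · -- support equals V ℓ by irreducibility
      set S : Set (Fin n) := {v | |x v| ≠ 0} with hS
      have hSsub : S ⊆ V ℓ := by
        intro v hv
        by_contra hvV
        exact hv (by rw [hx0 v hvV, abs_zero])
      have hSne : S.Nonempty := by
        rcases Function.ne_iff.mp hxne with ⟨v, hv⟩
        exact ⟨v, abs_ne_zero.mpr hv⟩
      have hScl : ∀ v ∉ S, ∀ u ∈ S, Λ v u = 0 := by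
        intro v hv u hu
        have hv' : |x v| = 0 := by simpa [hS] using hv
        exact suppClosed Λ hpos (fun w => abs_nonneg (x w))
          (absFixed Λ hpos hcol hxfix) v hv' u hu
      have hSeq : S = V ℓ := by
        by_contra hne
        exact hirr ℓ S hSsub hSne hne (fun v hv u hu => hScl v hv.2 u hu)
      intro v hv
      have : |x v| ≠ 0 := by rw [← hSeq] at hv; exact hv
      exact lt_of_le_of_ne (abs_nonneg _) (Ne.symm this)
  choose b hbfix hbzero hbpos using hB
  -- base points
  have hpt : ∀ ℓ, (hVne ℓ).choose ∈ V ℓ := fun ℓ => (hVne ℓ).choose_spec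
  set pt : Fin k → Fin n := fun ℓ => (hVne ℓ).choose with hptdef
  have hbne : ∀ ℓ, b ℓ (pt ℓ) ≠ 0 := fun ℓ => ne_of_gt (hbpos ℓ (pt ℓ) (hpt ℓ))
  have hbother : ∀ ℓ m, ℓ ≠ m → b ℓ (pt m) = 0 := by
    intro ℓ m hne
    refine hbzero ℓ (pt m) fun h => ?_
    exact (hdisj ℓ m hne).ne_of_mem h (hpt m) rfl
  -- evaluation of a combination at a base point
  have heval : ∀ (c : Fin k → ℝ) (m : Fin k),
      (∑ ℓ, c ℓ • b ℓ) (pt m) = c m * b m (pt m) := by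
    intro c m
    rw [Finset.sum_apply]
    rw [Finset.sum_eq_single m]
    · simp
    · intro ℓ _ hne
      simp [hbother ℓ m hne]
    · intro h; exact absurd (Finset.mem_univ m) h
  -- decomposition of any fixed point
  have hdecomp : ∀ x : Fin n → ℝ, Λ.mulVec x = x →
      x = ∑ ℓ, (fun ℓ => x (pt ℓ) / b ℓ (pt ℓ)) ℓ • b ℓ := by
    intro x hx
    set c : Fin k → ℝ := fun ℓ => x (pt ℓ) / b ℓ (pt ℓ) with hc
    set y : Fin n → ℝ := x - ∑ ℓ, c ℓ • b ℓ with hy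
    have hsumfix : Λ.mulVec (∑ ℓ, c ℓ • b ℓ) = ∑ ℓ, c ℓ • b ℓ := by
      rw [← Matrix.mulVecLin_apply, map_sum]
      refine Finset.sum_congr rfl fun ℓ _ => ?_
      rw [map_smul, Matrix.mulVecLin_apply, hbfix ℓ]
    have hyfix : Λ.mulVec y = y := by
      rw [hy, Matrix.mulVec_sub, hx, hsumfix]
    have hypt : ∀ m, y (pt m) = 0 := by
      intro m
      rw [hy]
      simp only [Pi.sub_apply]
      rw [heval c m, hc]
      simp only []
      rw [div_mul_cancel₀ _ (hbne m), sub_self]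
    have hy0 : y = 0 := by
      by_contra hne
      set S : Set (Fin n) := {v | |y v| ≠ 0} with hS
      have hSne : S.Nonempty := by
        rcases Function.ne_iff.mp hne with ⟨v, hv⟩
        exact ⟨v, by simpa [hS] using hv⟩
      have hScl : ∀ v ∉ S, ∀ u ∈ S, Λ v u = 0 := by
        intro v hv u hu
        have hv' : |y v| = 0 := by simpa [hS] using hv
        exact suppClosed Λ hpos (fun w => abs_nonneg (y w))
          (absFixed Λ hpos hcol hyfix) v hv' u hu
      obtain ⟨m, hm⟩ := minClosed Λ V hall S hSne hScl
      have : pt m ∈ S := hm (hpt m)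
      exact this (by rw [hypt m, abs_zero])
    have := sub_eq_zero.mp (hy ▸ hy0)
    exact this
  constructor
  · intro x hx v hv
    have hd := hdecomp x hx
    rw [hd, Finset.sum_apply]
    refine Finset.sum_eq_zero fun ℓ _ => ?_
    simp [hbzero ℓ v (hv ℓ)]
  · refine ⟨b, hbfix, hbzero, hbpos, ?_⟩
    intro x hx
    refine ⟨fun ℓ => x (pt ℓ) / b ℓ (pt ℓ), hdecomp x hx, ?_⟩
    intro c' hc'
    funext m
    have h1 : x (pt m) = c' m * b m (pt m) := by
      rw [hc', heval c' m]
    show c' m = x (pt m) / b m (pt m)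
    rw [h1, mul_div_assoc, div_self (hbne m), mul_one]
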